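/- arXiv:1712.03456 — 5 statements merged into one kernel-verified Lean document; each statement's English description precedes it below -/
import Mathlib

section
/- Let r_1, r_2 ≥ 2 and b_1, b_2 ≥ 1 be integers. Suppose that for all k_1 ≥ 1, n_1 ≥ r_1 k_1 and every partition P of [n_1] into parts of size at most b_1, one has χ(KG^{r_1}(n_1,k_1;P)) ≥ ⌈(n_1 - r_1(k_1-1))/(r_1-1)⌉, and similarly for all k_2 ≥ 1, n_2 ≥ r_2 k_2 and partitions Q of [n_2] with parts of size at most b_2, χ(KG^{r_2}(n_2,k_2;Q)) ≥ ⌈(n_2 - r_2(k_2-1))/(r_2-1)⌉. Then for all k ≥ 1, n ≥ r_1 r_2 k, and every partition R of [n] into parts of size at most b_1 b_2, one has χ(KG^{r_1 r_2}(n,k;R)) ≥ ⌈(n - r_1 r_2(k-1))/(r_1 r_2 - 1)⌉. -/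
open Finset

/-- Ceiling division on naturals: `⌈a / b⌉`. -/
def cld (a b : ℕ) : ℕ := (a + b - 1) / b

/-- `P` is a partition of `Fin N` indexed by `Fin n`. -/
def IsPartition {N n : ℕ} (P : Fin n → Finset (Fin N)) : Prop :=
  (∀ i j, i ≠ j → Disjoint (P i) (P j)) ∧ ∀ x, ∃ i, x ∈ P i

/-- `σ` is transversal to the partition `P`: it meets each part in at most one element. -/
def Transversal {N n : ℕ} (P : Fin n → Finset (Fin N)) (σ : Finset (Fin N)) : Prop :=
  ∀ i, (σ ∩ P i).card ≤ 1

/-- A set `σ ⊆ [n]` is `t`-wide: it is not contained in any interval of length `t`. -/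
def Wide (n t : ℕ) (σ : Finset (Fin n)) : Prop :=
  ∀ a : ℕ, ¬ ∀ x ∈ σ, a ≤ x.val ∧ x.val < a + t

/-- Cyclic distance between two elements of `[n]`. -/
def cycDist (n : ℕ) (x y : Fin n) : ℕ :=
  min (max x.val y.val - min x.val y.val) (n - (max x.val y.val - min x.val y.val))

/-- `σ` is `s`-stable: any two of its elements are at cyclic distance at least `s`. -/
def Stable (n s : ℕ) (σ : Finset (Fin n)) : Prop :=
  ∀ x ∈ σ, ∀ y ∈ σ, x ≠ y → s ≤ cycDist n x y

/-- `b(r) = 2^{α₀}(p₁-1)^{α₁}⋯(p_t-1)^{α_t}` for `r = 2^{α₀}p₁^{α₁}⋯p_t^{α_t}`. -/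
def bfun (r : ℕ) : ℕ := r.factorization.prod fun p a => (if p = 2 then 2 else p - 1) ^ a

/-- Proper coloring of `KG^r(n,k)`: no `r` pairwise disjoint `k`-subsets monochromatic. -/
def ProperKG (r n k : ℕ) {m : ℕ} (c : Finset (Fin n) → Fin m) : Prop :=
  ∀ A : Fin r → Finset (Fin n), (∀ j, (A j).card = k) →
    (∀ j j', j ≠ j' → Disjoint (A j) (A j')) →
    ¬ ∀ j j', c (A j) = c (A j')

noncomputable def chiKG (r n k : ℕ) : ℕ :=
  sInf {m | ∃ c : Finset (Fin n) → Fin m, ProperKG r n k c}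

/-- Proper coloring of `KG^r(N,k;P)` (vertices: transversal `k`-subsets). -/
def ProperP (r N k : ℕ) {ℓ : ℕ} (P : Fin ℓ → Finset (Fin N)) {m : ℕ}
    (c : Finset (Fin N) → Fin m) : Prop :=
  ∀ A : Fin r → Finset (Fin N), (∀ j, (A j).card = k) →
    (∀ j, Transversal P (A j)) →
    (∀ j j', j ≠ j' → Disjoint (A j) (A j')) →
    ¬ ∀ j j', c (A j) = c (A j')

noncomputable def chiP (r N k : ℕ) {ℓ : ℕ} (P : Fin ℓ → Finset (Fin N)) : ℕ :=
  sInf {m | ∃ c : Finset (Fin N) → Fin m, ProperP r N k P c}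

/-- Proper coloring of `KG^r_s(n,k)`: a hyperedge is an `r`-tuple of `k`-subsets such that
each `i ∈ [n]` lies in at most `s i` of them. -/
def ProperS (r n k : ℕ) (s : Fin n → ℕ) {m : ℕ} (c : Finset (Fin n) → Fin m) : Prop :=
  ∀ A : Fin r → Finset (Fin n), (∀ j, (A j).card = k) →
    (∀ i : Fin n, ((univ : Finset (Fin r)).filter fun j => i ∈ A j).card ≤ s i) →
    ¬ ∀ j j', c (A j) = c (A j')

noncomputable def chiS (r n k : ℕ) (s : Fin n → ℕ) : ℕ :=
  sInf {m | ∃ c : Finset (Fin n) → Fin m, ProperS r n k s c}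

/-- Proper coloring of `KG^r_A(n,k)` (vertices: `k`-subsets not contained in `A`). -/
def ProperA (r n k : ℕ) (A : Finset (Fin n)) {m : ℕ} (c : Finset (Fin n) → Fin m) : Prop :=
  ∀ B : Fin r → Finset (Fin n), (∀ j, (B j).card = k) → (∀ j, ¬ B j ⊆ A) →
    (∀ j j', j ≠ j' → Disjoint (B j) (B j')) →
    ¬ ∀ j j', c (B j) = c (B j')

noncomputable def chiA (r n k : ℕ) (A : Finset (Fin n)) : ℕ :=
  sInf {m | ∃ c : Finset (Fin n) → Fin m, ProperA r n k A c}

/-- Proper coloring of the `r`-stable subhypergraph `KG^r(n,k)_{r-stab}`. -/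
def ProperStab (r n k : ℕ) {m : ℕ} (c : Finset (Fin n) → Fin m) : Prop :=
  ∀ A : Fin r → Finset (Fin n), (∀ j, (A j).card = k) → (∀ j, Stable n r (A j)) →
    (∀ j j', j ≠ j' → Disjoint (A j) (A j')) →
    ¬ ∀ j j', c (A j) = c (A j')

noncomputable def chiStab (r n k : ℕ) : ℕ :=
  sInf {m | ∃ c : Finset (Fin n) → Fin m, ProperStab r n k c}

/-- Proper coloring of `KG^r(N,k;P)_{t-wide}` (vertices: `t`-wide transversal `k`-subsets). -/
def ProperPW (r N k t : ℕ) {ℓ : ℕ} (P : Fin ℓ → Finset (Fin N)) {m : ℕ}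
    (c : Finset (Fin N) → Fin m) : Prop :=
  ∀ A : Fin r → Finset (Fin N), (∀ j, (A j).card = k) →
    (∀ j, Transversal P (A j)) → (∀ j, Wide N t (A j)) →
    (∀ j j', j ≠ j' → Disjoint (A j) (A j')) →
    ¬ ∀ j j', c (A j) = c (A j')

noncomputable def chiPW (r N k t : ℕ) {ℓ : ℕ} (P : Fin ℓ → Finset (Fin N)) : ℕ :=
  sInf {m | ∃ c : Finset (Fin N) → Fin m, ProperPW r N k t P c}

/-- Proper coloring of `KG^r_s(n,k)_{t-wide}` (vertices: `t`-wide `k`-subsets). -/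
def ProperSW (r n k t : ℕ) (s : Fin n → ℕ) {m : ℕ} (c : Finset (Fin n) → Fin m) : Prop :=
  ∀ A : Fin r → Finset (Fin n), (∀ j, (A j).card = k) → (∀ j, Wide n t (A j)) →
    (∀ i : Fin n, ((univ : Finset (Fin r)).filter fun j => i ∈ A j).card ≤ s i) →
    ¬ ∀ j j', c (A j) = c (A j')

noncomputable def chiSW (r n k t : ℕ) (s : Fin n → ℕ) : ℕ :=
  sInf {m | ∃ c : Finset (Fin n) → Fin m, ProperSW r n k t s c}

/-- Extension of `s : Fin n → ℕ` to `ℕ` by zero. -/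
def sE {n : ℕ} (s : Fin n → ℕ) (i : ℕ) : ℕ := if h : i < n then s ⟨i, h⟩ else 0

/-- `blockSum s j t = s_j + s_{j+1} + ⋯ + s_{j+t-1}`. -/
def blockSum {n : ℕ} (s : Fin n → ℕ) (j t : ℕ) : ℕ := ∑ i ∈ Finset.Ico j (j + t), sE s i

/-- The partition of `[N]` into consecutive blocks of sizes `s_1, …, s_n`. -/
def blocks {n : ℕ} (s : Fin n → ℕ) (N : ℕ) (j : Fin n) : Finset (Fin N) :=
  univ.filter fun x => blockSum s 0 j.val ≤ x.val ∧ x.val < blockSum s 0 (j.val + 1)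



lemma cld_le_iff {a b m : ℕ} (hb : 1 ≤ b) : cld a b ≤ m ↔ a ≤ m * b := by
  unfold cld
  rw [Nat.div_le_iff_le_mul_add_pred (by omega), Nat.mul_comm b m]
  obtain ⟨X, hX⟩ : ∃ X, m * b = X := ⟨_, rfl⟩
  rw [hX]
  omega

lemma cld_succ {m b : ℕ} (hb : 1 ≤ b) : cld (m*b+1) b = m+1 := by
  unfold cld
  have h : m*b+1+b-1 = m*b+b := by
    obtain ⟨X, hX⟩ : ∃ X, m * b = X := ⟨_, rfl⟩
    rw [hX]; omega
  rw [h, ← Nat.succ_mul, Nat.mul_div_cancel _ (by omega)]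

lemma rnk_lt_card {n : ℕ} {s : Finset (Fin n)} {x : Fin n} (hx : x ∈ s) :
    (s.filter (fun y => y < x)).card < s.card := by
  apply Finset.card_lt_card
  constructor
  · exact Finset.filter_subset _ _
  · intro hsub
    have := hsub hx
    simp at this

lemma rnk_lt_rnk {n : ℕ} {s : Finset (Fin n)} {x y : Fin n} (hx : x ∈ s) (hxy : x < y) :
    (s.filter (fun z => z < x)).card < (s.filter (fun z => z < y)).card := by
  apply Finset.card_lt_card
  constructor
  · intro z hz
    simp only [mem_filter] at *
    exact ⟨hz.1, lt_trans hz.2 hxy⟩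
  · intro hsub
    have := hsub (by simp [hx, hxy] : x ∈ s.filter (fun z => z < y))
    simp at this

lemma rnk_inj {n : ℕ} {s : Finset (Fin n)} {x y : Fin n} (hx : x ∈ s) (hy : y ∈ s)
    (h : (s.filter (fun z => z < x)).card = (s.filter (fun z => z < y)).card) : x = y := by
  rcases lt_trichotomy x y with h1 | h1 | h1
  · exact absurd h (Nat.ne_of_lt (rnk_lt_rnk hx h1))
  · exact h1
  · exact absurd h.symm (Nat.ne_of_lt (rnk_lt_rnk hy h1))

lemma chunk_card_le {n : ℕ} (s : Finset (Fin n)) (b1 j : ℕ) (hb1 : 0 < b1) :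
    (s.filter (fun x => (s.filter (fun y => y < x)).card / b1 = j)).card ≤ b1 := by
  have h : (s.filter (fun x => (s.filter (fun y => y < x)).card / b1 = j)).card
      ≤ (Finset.Ico (j*b1) (j*b1 + b1)).card := by
    refine Finset.card_le_card_of_injOn (fun x => (s.filter (fun y => y < x)).card) ?_ ?_
    · intro x hx
      simp only [mem_coe, mem_filter] at hx
      simp only [mem_coe, Finset.mem_Ico]
      constructor
      · have := Nat.div_mul_le_self (s.filter (fun y => y < x)).card b1
        rw [hx.2] at this
        exact this
      · have h2 : (s.filter (fun y => y < x)).card / b1 < j + 1 := by omega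
        rw [Nat.div_lt_iff_lt_mul hb1] at h2
        calc (s.filter (fun y => y < x)).card < (j+1)*b1 := h2
          _ = j*b1 + b1 := by ring
    · intro x hx y hy hxy
      simp only [coe_filter, Set.mem_setOf_eq] at hx hy
      exact rnk_inj hx.1 hy.1 hxy
  simpa using h

lemma arith_final (r1 r2 k m n : ℕ) (hr1 : 2 ≤ r1) (hr2 : 2 ≤ r2) (hk : 1 ≤ k) (hm : 1 ≤ m)
    (h1 : m*(r1*r2-1) < n - r1*r2*(k-1))
    (h2 : n - r1*(r2*(k-1) + m*(r2-1) + 1 - 1) ≤ m*(r1-1)) : False := by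
  obtain ⟨a, rfl⟩ := Nat.exists_eq_add_of_le hr1
  obtain ⟨b, rfl⟩ := Nat.exists_eq_add_of_le hr2
  obtain ⟨K, rfl⟩ := Nat.exists_eq_add_of_le hk
  have e1 : (2+b) - 1 = 1 + b := by omega
  have e2 : (2+a) - 1 = 1 + a := by omega
  have e3 : (1+K) - 1 = K := by omega
  have e4 : (2+a)*(2+b) - 1 = 3 + 2*a + 2*b + a*b := by
    have h : (2+a)*(2+b) = 4 + 2*a + 2*b + a*b := by ring
    rw [h]
    obtain ⟨X, hX⟩ : ∃ X, a*b = X := ⟨_, rfl⟩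
    rw [hX]; omega
  rw [e3, e4] at h1
  rw [e1, e2, e3] at h2
  have e5 : (2+b)*K + m*(1+b) + 1 - 1 = (2+b)*K + m*(1+b) := by omega
  rw [e5] at h2
  have h1' : (2+a)*(2+b)*K + m*(3+2*a+2*b+a*b) < n := by
    obtain ⟨X, hX⟩ : ∃ X, (2+a)*(2+b)*K = X := ⟨_, rfl⟩
    obtain ⟨Y, hY⟩ : ∃ Y, m*(3+2*a+2*b+a*b) = Y := ⟨_, rfl⟩
    rw [hX, hY] at h1 ⊢
    omega
  have h2' : n ≤ (2+a)*((2+b)*K + m*(1+b)) + m*(1+a) := by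
    obtain ⟨X, hX⟩ : ∃ X, (2+a)*((2+b)*K + m*(1+b)) = X := ⟨_, rfl⟩
    obtain ⟨Y, hY⟩ : ∃ Y, m*(1+a) = Y := ⟨_, rfl⟩
    rw [hX, hY] at h2 ⊢
    omega
  have e6 : (2+a)*((2+b)*K + m*(1+b)) + m*(1+a) = (2+a)*(2+b)*K + m*(3+2*a+2*b+a*b) := by ring
  rw [e6] at h2'
  omega

lemma arith_case (r1 r2 k m n : ℕ) (hr1 : 2 ≤ r1) (hr2 : 2 ≤ r2) (hk : 1 ≤ k) (hm : 1 ≤ m)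
    (hn : r1*r2*k ≤ n)
    (h1 : m*(r1*r2-1) < n - r1*r2*(k-1))
    (hlt : n < r1 * (r2*(k-1) + m*(r2-1) + 1)) : False := by
  obtain ⟨a, rfl⟩ := Nat.exists_eq_add_of_le hr1
  obtain ⟨b, rfl⟩ := Nat.exists_eq_add_of_le hr2
  obtain ⟨K, rfl⟩ := Nat.exists_eq_add_of_le hk
  obtain ⟨M, rfl⟩ := Nat.exists_eq_add_of_le hm
  have e1 : (2+b) - 1 = 1 + b := by omega
  have e3 : (1+K) - 1 = K := by omega
  have e4 : (2+a)*(2+b) - 1 = 3 + 2*a + 2*b + a*b := by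
    have h : (2+a)*(2+b) = 4 + 2*a + 2*b + a*b := by ring
    rw [h]
    obtain ⟨X, hX⟩ : ∃ X, a*b = X := ⟨_, rfl⟩
    rw [hX]; omega
  rw [e3, e4] at h1
  rw [e1, e3] at hlt
  have h1' : (2+a)*(2+b)*K + (1+M)*(3+2*a+2*b+a*b) < n := by
    obtain ⟨X, hX⟩ : ∃ X, (2+a)*(2+b)*K = X := ⟨_, rfl⟩
    obtain ⟨Y, hY⟩ : ∃ Y, (1+M)*(3+2*a+2*b+a*b) = Y := ⟨_, rfl⟩
    rw [hX, hY] at h1 ⊢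
    omega
  -- combine h1', hlt, hn
  nlinarith [h1', hlt, hn, sq_nonneg (a*b), Nat.zero_le (M*a), Nat.zero_le (M*(a*b))]


lemma arith_k' (r2 k m : ℕ) (hr2 : 2 ≤ r2) (hk : 1 ≤ k) (hm : 1 ≤ m) :
    r2*k ≤ r2*(k-1)+m*(r2-1)+1 := by
  obtain ⟨b, rfl⟩ := Nat.exists_eq_add_of_le hr2
  obtain ⟨K, rfl⟩ := Nat.exists_eq_add_of_le hk
  have e1 : (2+b) - 1 = 1 + b := by omega
  have e3 : (1+K) - 1 = K := by omega
  rw [e1, e3]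
  nlinarith [Nat.zero_le (m*b)]

lemma arith_sub (r2 k m : ℕ) : r2*(k-1)+m*(r2-1)+1 - r2*(k-1) = m*(r2-1)+1 := by
  obtain ⟨X, hX⟩ : ∃ X, r2*(k-1) = X := ⟨_, rfl⟩
  obtain ⟨Y, hY⟩ : ∃ Y, m*(r2-1) = Y := ⟨_, rfl⟩
  rw [hX, hY]; omega

/-- the reduction lemma for products `r₁r₂`. -/
theorem stmt1 (r1 r2 b1 b2 : ℕ) (hr1 : 2 ≤ r1) (hr2 : 2 ≤ r2) (hb1 : 1 ≤ b1) (hb2 : 1 ≤ b2)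
    (H1 : ∀ (k1 n1 l : ℕ) (P : Fin l → Finset (Fin n1)), 1 ≤ k1 → r1 * k1 ≤ n1 →
      IsPartition P → (∀ i, (P i).card ≤ b1) →
      cld (n1 - r1 * (k1 - 1)) (r1 - 1) ≤ chiP r1 n1 k1 P)
    (H2 : ∀ (k2 n2 l : ℕ) (Q : Fin l → Finset (Fin n2)), 1 ≤ k2 → r2 * k2 ≤ n2 →
      IsPartition Q → (∀ i, (Q i).card ≤ b2) →
      cld (n2 - r2 * (k2 - 1)) (r2 - 1) ≤ chiP r2 n2 k2 Q)
    (k n t : ℕ) (R : Fin t → Finset (Fin n)) (hk : 1 ≤ k) (hn : r1 * r2 * k ≤ n)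
    (hR : IsPartition R) (hRc : ∀ i, (R i).card ≤ b1 * b2) :
    cld (n - r1 * r2 * (k - 1)) (r1 * r2 - 1) ≤ chiP (r1 * r2) n k R := by
  classical
  have hrr : 2 ≤ r1 * r2 := by nlinarith
  have hb1' : 0 < b1 := hb1
  -- nonemptiness of the coloring set
  obtain ⟨e⟩ : Nonempty (Finset (Fin n) ≃ Fin (2^n)) :=
    ⟨Fintype.equivFinOfCardEq (by simp [Fintype.card_finset])⟩
  have hne : {mm | ∃ c : Finset (Fin n) → Fin mm, ProperP (r1*r2) n k R c}.Nonempty := by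
    refine ⟨2^n, fun S => e S, ?_⟩
    intro A hcard _ hdisj hall
    have h01 : (⟨0, by omega⟩ : Fin (r1*r2)) ≠ ⟨1, by omega⟩ := by
      intro h
      simpa using congrArg Fin.val h
    have hd := hdisj _ _ h01
    have hA : A ⟨0, by omega⟩ = A ⟨1, by omega⟩ := e.injective (hall _ _)
    rw [hA, disjoint_self] at hd
    have hcc := hcard (⟨1, by omega⟩ : Fin (r1*r2))
    rw [hd] at hcc
    simp at hcc
    omega
  unfold chiP
  have hmem0 := Nat.sInf_mem hne
  generalize hmdef : sInf {mm | ∃ c : Finset (Fin n) → Fin mm, ProperP (r1*r2) n k R c} = m at hmem0 ⊢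
  obtain ⟨c, hc⟩ := hmem0
  have hm1 : 1 ≤ m := by
    by_contra h
    have h0 : m = 0 := by omega
    exact Nat.not_lt_zero _ (h0 ▸ (c ∅)).isLt
  rw [cld_le_iff (show (1:ℕ) ≤ r1*r2 - 1 from Nat.le_pred_of_lt hrr)]
  by_contra hcon
  push_neg at hcon
  set k' := r2*(k-1) + m*(r2-1) + 1 with hk'def
  by_cases hk'n : r1 * k' ≤ n
  case neg =>
    have hlt : n < r1 * k' := lt_of_not_ge hk'n
    rw [hk'def] at hlt
    exact arith_case r1 r2 k m n hr1 hr2 hk hm1 hn hcon hlt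
  -- the chunked refinement partition P'
  let e2 : Fin t × Fin b2 ≃ Fin (t*b2) := finProdFinEquiv
  let P' : Fin (t*b2) → Finset (Fin n) := fun p =>
    (R (e2.symm p).1).filter
      (fun x => ((R (e2.symm p).1).filter (fun y => y < x)).card / b1 = ((e2.symm p).2 : ℕ))
  have hP'card : ∀ p, (P' p).card ≤ b1 := fun p => chunk_card_le _ _ _ hb1'
  have hP'part : IsPartition P' := by
    constructor
    · intro p q hpq
      rw [Finset.disjoint_left]
      intro x hxp hxq
      simp only [P', mem_filter] at hxp hxq
      by_cases hij : (e2.symm p).1 = (e2.symm q).1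
      · apply hpq
        have h2 := hxp.2
        rw [hij] at h2
        have hj : (e2.symm p).2 = (e2.symm q).2 := Fin.ext (by rw [← h2, ← hxq.2])
        exact e2.symm.injective (Prod.ext hij hj)
      · exact (Finset.disjoint_left.mp (hR.1 _ _ hij) hxp.1) hxq.1
    · intro x
      obtain ⟨i, hi⟩ := hR.2 x
      have hlt : ((R i).filter (fun y => y < x)).card / b1 < b2 := by
        rw [Nat.div_lt_iff_lt_mul hb1']
        calc ((R i).filter (fun y => y < x)).card < (R i).card := rnk_lt_card hi
          _ ≤ b1*b2 := hRc i
          _ = b2*b1 := Nat.mul_comm _ _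
      refine ⟨e2 (i, ⟨_, hlt⟩), ?_⟩
      simp only [P', Equiv.symm_apply_apply, mem_filter]
      exact ⟨hi, trivial⟩
  -- a transversal set meets each original part at most b2 times
  have hSRi : ∀ S : Finset (Fin n), Transversal P' S → ∀ i, (S ∩ R i).card ≤ b2 := by
    intro S hT i
    have h : (S ∩ R i).card ≤ (Finset.range b2).card := by
      refine Finset.card_le_card_of_injOn
        (fun x => ((R i).filter (fun y => y < x)).card / b1) ?_ ?_
      · intro x hx
        rw [Finset.mem_coe, Finset.mem_inter] at hx
        simp only [mem_coe, mem_range]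
        rw [Nat.div_lt_iff_lt_mul hb1']
        calc ((R i).filter (fun y => y < x)).card < (R i).card := rnk_lt_card hx.2
          _ ≤ b1*b2 := hRc i
          _ = b2*b1 := Nat.mul_comm _ _
      · intro x hx y hy hxy
        by_contra hne2
        simp only [coe_inter, Set.mem_inter_iff, mem_coe] at hx hy
        have hjlt : ((R i).filter (fun y => y < x)).card / b1 < b2 := by
          rw [Nat.div_lt_iff_lt_mul hb1']
          calc ((R i).filter (fun y => y < x)).card < (R i).card := rnk_lt_card hx.2
            _ ≤ b1*b2 := hRc i
            _ = b2*b1 := Nat.mul_comm _ _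
        have hxP : x ∈ P' (e2 (i, ⟨_, hjlt⟩)) := by
          simp only [P', Equiv.symm_apply_apply, mem_filter]
          exact ⟨hx.2, trivial⟩
        have hyP : y ∈ P' (e2 (i, ⟨_, hjlt⟩)) := by
          simp only [P', Equiv.symm_apply_apply, mem_filter]
          exact ⟨hy.2, by simpa using hxy.symm⟩
        have h2 : 1 < (S ∩ P' (e2 (i, ⟨_, hjlt⟩))).card :=
          Finset.one_lt_card.2
            ⟨x, Finset.mem_inter.2 ⟨hx.1, hxP⟩, y, Finset.mem_inter.2 ⟨hy.1, hyP⟩, hne2⟩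
        exact absurd (hT (e2 (i, ⟨_, hjlt⟩))) (not_le.2 h2)
    simpa using h
  have hr2k' : r2*k ≤ k' := by
    rw [hk'def]; exact arith_k' r2 k m hr2 hk hm1
  -- inner step: every transversal k'-set contains a monochromatic r2-family
  have key : ∀ S : Finset (Fin n), S.card = k' → Transversal P' S →
      ∃ B : Fin r2 → Finset (Fin n),
        (∀ j, (B j).card = k) ∧ (∀ j, B j ⊆ S) ∧ (∀ j, Transversal R (B j)) ∧
        (∀ j j', j ≠ j' → Disjoint (B j) (B j')) ∧ (∀ j j', c (B j) = c (B j')) := by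
    intro S hScard hST
    let ι : Fin k' → Fin n := fun x => ((S.orderIsoOfFin hScard x : {y // y ∈ S}) : Fin n)
    have hιinj : Function.Injective ι := fun a b h =>
      (S.orderIsoOfFin hScard).injective (Subtype.ext h)
    have hιmem : ∀ x, ι x ∈ S := fun x => (S.orderIsoOfFin hScard x).2
    let Q : Fin t → Finset (Fin k') := fun i => univ.filter (fun x => ι x ∈ R i)
    have hQpart : IsPartition Q := by
      constructor
      · intro i j hij
        rw [Finset.disjoint_left]
        intro x hxi hxj
        simp only [Q, mem_filter] at hxi hxj
        exact (Finset.disjoint_left.mp (hR.1 i j hij) hxi.2) hxj.2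
      · intro x
        obtain ⟨i, hi⟩ := hR.2 (ι x)
        exact ⟨i, by simp only [Q, mem_filter, mem_univ, true_and]; exact hi⟩
    have hQcard : ∀ i, (Q i).card ≤ b2 := by
      intro i
      have h1 : (Q i).card ≤ (S ∩ R i).card := by
        refine Finset.card_le_card_of_injOn ι ?_ (fun a _ b _ h => hιinj h)
        intro x hx
        simp only [Q, mem_coe, mem_filter] at hx
        exact Finset.mem_inter.2 ⟨hιmem x, hx.2⟩
      exact h1.trans (hSRi S hST i)
    have hH2 := H2 k k' t Q hk hr2k' hQpart hQcard
    have hchi : m + 1 ≤ chiP r2 k' k Q := by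
      have hsub : k' - r2*(k-1) = m*(r2-1)+1 := by rw [hk'def]; exact arith_sub r2 k m
      rw [hsub, cld_succ (show 1 ≤ r2 - 1 by omega)] at hH2
      exact hH2
    have hnp : ¬ ProperP r2 k' k Q (fun σ => c (σ.image ι)) := by
      intro hp
      have hle : chiP r2 k' k Q ≤ m := Nat.sInf_le ⟨_, hp⟩
      exact Nat.not_succ_le_self m (le_trans hchi hle)
    unfold ProperP at hnp
    push_neg at hnp
    obtain ⟨A, hA1, hA2, hA3, hA4⟩ := hnp
    refine ⟨fun j => (A j).image ι, ?_, ?_, ?_, ?_, ?_⟩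
    · intro j
      rw [Finset.card_image_of_injective _ hιinj, hA1 j]
    · intro j x hx
      obtain ⟨a, _, rfl⟩ := Finset.mem_image.1 hx
      exact hιmem a
    · intro j i
      have hsub2 : (A j).image ι ∩ R i ⊆ ((A j) ∩ Q i).image ι := by
        intro y hy
        rw [Finset.mem_inter] at hy
        obtain ⟨a, ha, rfl⟩ := Finset.mem_image.1 hy.1
        refine Finset.mem_image.2 ⟨a, Finset.mem_inter.2 ⟨ha, ?_⟩, rfl⟩
        simp only [Q, mem_filter, mem_univ, true_and]
        exact hy.2
      calc ((A j).image ι ∩ R i).card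
          ≤ (((A j) ∩ Q i).image ι).card := Finset.card_le_card hsub2
        _ = ((A j) ∩ Q i).card := Finset.card_image_of_injective _ hιinj
        _ ≤ 1 := hA2 j i
    · intro j j' hjj'
      exact (Finset.disjoint_image hιinj).2 (hA3 j j' hjj')
    · intro j j'
      exact hA4 j j'
  choose Bf hB1 hB2 hB3 hB4 hB5 using key
  have hr2pos : 0 < r2 := by omega
  -- the induced coloring of the outer hypergraph is proper
  have hmem' : m ∈ {mm | ∃ c0 : Finset (Fin n) → Fin mm, ProperP r1 n k' P' c0} := by
    refine ⟨fun S => if h : S.card = k' ∧ Transversal P' S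
      then c (Bf S h.1 h.2 ⟨0, hr2pos⟩) else c ∅, ?_⟩
    intro Sf hSc hSt hSd hall
    have hcol : ∀ i : Fin r1, ∀ j : Fin r2,
        c (Bf (Sf i) (hSc i) (hSt i) j)
          = c (Bf (Sf i) (hSc i) (hSt i) ⟨0, hr2pos⟩) := fun i j => hB5 _ _ _ j _
    have hdite : ∀ i : Fin r1,
        (if h : (Sf i).card = k' ∧ Transversal P' (Sf i)
          then c (Bf (Sf i) h.1 h.2 ⟨0, hr2pos⟩) else c ∅)
          = c (Bf (Sf i) (hSc i) (hSt i) ⟨0, hr2pos⟩) := by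
      intro i
      rw [dif_pos ⟨hSc i, hSt i⟩]
    let e1 : Fin r1 × Fin r2 ≃ Fin (r1*r2) := finProdFinEquiv
    refine hc (fun p => Bf (Sf (e1.symm p).1) (hSc _) (hSt _) (e1.symm p).2)
      (fun p => hB1 _ _ _ _) (fun p => hB3 _ _ _ _) ?_ ?_
    · intro p q hpq
      by_cases hii : (e1.symm p).1 = (e1.symm q).1
      · have hjj : (e1.symm p).2 ≠ (e1.symm q).2 := by
          intro hjj
          exact hpq (e1.symm.injective (Prod.ext hii hjj))
        show Disjoint (Bf (Sf (e1.symm p).1) (hSc _) (hSt _) (e1.symm p).2)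
          (Bf (Sf (e1.symm q).1) (hSc _) (hSt _) (e1.symm q).2)
        rw [hii]
        exact hB4 _ _ _ _ _ hjj
      · exact Finset.disjoint_of_subset_left (hB2 _ _ _ _)
          (Finset.disjoint_of_subset_right (hB2 _ _ _ _) (hSd _ _ hii))
    · intro p q
      show c (Bf (Sf (e1.symm p).1) _ _ (e1.symm p).2)
          = c (Bf (Sf (e1.symm q).1) _ _ (e1.symm q).2)
      rw [hcol (e1.symm p).1 (e1.symm p).2, hcol (e1.symm q).1 (e1.symm q).2,
          ← hdite (e1.symm p).1, ← hdite (e1.symm q).1]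
      exact hall _ _
  have hle : chiP r1 n k' P' ≤ m := Nat.sInf_le hmem'
  have hH1 := H1 k' n (t*b2) P'
    (by rw [hk'def]; exact Nat.succ_le_succ (Nat.zero_le _)) hk'n hP'part hP'card
  have hfin : n - r1*(k'-1) ≤ m*(r1-1) := by
    rw [← cld_le_iff (show (1:ℕ) ≤ r1-1 by omega)]
    exact le_trans hH1 hle
  rw [hk'def] at hfin
  exact arith_final r1 r2 k m n hr1 hr2 hk hm1 hcon hfin
end

section
/- Suppose that for r = 2 and for all valid parameters, χ(KG^2(n,k)_{2-stab}) = n - 2(k-1) (Schrijver's theorem), and suppose Ziegler's conjecture χ(KG^r(n,k)_{r-stab}) = ⌈(n-r(k-1))/(r-1)⌉ is closed under products of the parameter r. Then for r = 2^t a power of two, k ≥ 1, n ≥ rk, and any partition P of [n] with all parts of size at most r, χ(KG^r(n,k;P)) = ⌈(n - r(k-1))/(r-1)⌉. -/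
open Finset

/-- Ziegler's conjecture for the parameter `r`. -/
def Ziegler (r : ℕ) : Prop :=
  ∀ n k : ℕ, 1 ≤ k → r * k ≤ n → chiStab r n k = cld (n - r * (k - 1)) (r - 1)


section Aux

lemma cld_mul_ge (a b : ℕ) (hb : 0 < b) : a ≤ b * cld a b := by
  unfold cld
  have h1 := Nat.div_add_mod (a + b - 1) b
  have h2 : (a + b - 1) % b < b := Nat.mod_lt _ hb
  omega

lemma cld_pos (a b : ℕ) (ha : 0 < a) (hb : 0 < b) : 1 ≤ cld a b := by
  unfold cld
  rw [Nat.one_le_div_iff hb]; omega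

lemma greedy (r n k : ℕ) (hr : 2 ≤ r) (hk : 1 ≤ k) (hn : r * k ≤ n) :
    ∃ c : Finset (Fin n) → Fin (cld (n - r*(k-1)) (r-1)), ProperKG r n k c := by
  classical
  set m := cld (n - r*(k-1)) (r-1) with hm
  have hrk2 : 2 ≤ r * k := le_trans (by omega) (Nat.mul_le_mul hr hk)
  have hrkr : r*(k-1) + r = r*k := by
    rw [← Nat.mul_succ]; congr 1; omega
  have hm1 : 1 ≤ m := cld_pos _ _ (by omega) (by omega)
  set low : Finset (Fin n) → ℕ :=
    fun σ => if h : σ.Nonempty then (σ.min' h).val else 0 with hlow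
  refine ⟨fun σ => ⟨min (low σ / (r-1)) (m - 1), by omega⟩, ?_⟩
  intro A hcard hdis hmono
  have hne : ∀ j, (A j).Nonempty := fun j => Finset.card_pos.mp (by rw [hcard]; omega)
  set x : Fin r → Fin n := fun j => (A j).min' (hne j) with hx
  have hxmem : ∀ j, x j ∈ A j := fun j => Finset.min'_mem _ _
  have hxinj : Function.Injective x := by
    intro j j' h
    by_contra hne'
    exact (Finset.disjoint_left.mp (hdis j j' hne')) (hxmem j) (h ▸ hxmem j')
  have hlx : ∀ j, low (A j) = (x j).val := fun j => dif_pos (hne j)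
  have j0 : Fin r := ⟨0, by omega⟩
  have hvq : ∀ j, min ((x j).val / (r-1)) (m-1) = min ((x j0).val / (r-1)) (m-1) := by
    intro j
    have := hmono j j0
    have := congrArg Fin.val this
    simpa [hlx] using this
  set v := min ((x j0).val / (r-1)) (m-1) with hv
  have hvle : v ≤ m - 1 := min_le_right _ _
  rcases lt_or_eq_of_le hvle with hvlt | hveq
  · -- each x j in interval [v*(r-1), (v+1)*(r-1))
    have hint : ∀ j, v*(r-1) ≤ (x j).val ∧ (x j).val < (v+1)*(r-1) := by
      intro j
      have hq : (x j).val / (r-1) = v := by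
        have := hvq j; omega
      constructor
      · rw [← hq]; exact Nat.div_mul_le_self _ _
      · rw [← hq, mul_comm]
        exact Nat.lt_mul_div_succ _ (by omega)
    have hS : (univ.image x).card = r := by
      rw [Finset.card_image_of_injective _ hxinj, card_univ, Fintype.card_fin]
    have hsub : (univ.image x) ⊆ univ.filter
        (fun z : Fin n => v*(r-1) ≤ z.val ∧ z.val < (v+1)*(r-1)) := by
      intro z hz
      simp only [Finset.mem_image] at hz
      obtain ⟨j, _, rfl⟩ := hz
      simp [hint j]
    have hFle : (univ.filter
        (fun z : Fin n => v*(r-1) ≤ z.val ∧ z.val < (v+1)*(r-1))).card ≤ r - 1 := by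
      have h1 : (univ.filter
          (fun z : Fin n => v*(r-1) ≤ z.val ∧ z.val < (v+1)*(r-1))).card
          ≤ (Finset.Ico (v*(r-1)) ((v+1)*(r-1))).card := by
        apply Finset.card_le_card_of_injOn (fun z => z.val)
        · intro z hz; simp only [Finset.mem_coe, Finset.mem_filter] at hz
          simp [Finset.mem_Ico, hz.2]
        · intro a _ b _ h; exact Fin.ext h
      rw [Nat.card_Ico] at h1
      have : (v+1)*(r-1) = v*(r-1) + (r-1) := by ring
      omega
    have := Finset.card_le_card hsub
    omega
  · -- all elements ≥ (m-1)*(r-1)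
    have hbig : ∀ j, ∀ z ∈ A j, (m-1)*(r-1) ≤ z.val := by
      intro j z hz
      have hq : m - 1 ≤ (x j).val / (r-1) := by have := hvq j; omega
      have h1 : (m-1)*(r-1) ≤ (x j).val := (Nat.le_div_iff_mul_le (by omega)).mp hq
      have h2 : x j ≤ z := Finset.min'_le _ _ hz
      have := Fin.le_iff_val_le_val.mp h2
      omega
    have hU : (univ.biUnion A).card = r * k := by
      rw [Finset.card_biUnion (fun j _ j' _ h => hdis j j' h)]
      simp [hcard, mul_comm]
    have hsub : (univ.biUnion A) ⊆ univ.filter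
        (fun z : Fin n => (m-1)*(r-1) ≤ z.val) := by
      intro z hz
      simp only [Finset.mem_biUnion] at hz
      obtain ⟨j, _, hj⟩ := hz
      simp [hbig j z hj]
    have hFle : (univ.filter (fun z : Fin n => (m-1)*(r-1) ≤ z.val)).card
        ≤ n - (m-1)*(r-1) := by
      have h1 : (univ.filter (fun z : Fin n => (m-1)*(r-1) ≤ z.val)).card
          ≤ (Finset.Ico ((m-1)*(r-1)) n).card := by
        apply Finset.card_le_card_of_injOn (fun z => z.val)
        · intro z hz; simp only [Finset.mem_coe, Finset.mem_filter] at hz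
          simp [Finset.mem_Ico, hz.2, z.isLt]
        · intro a _ b _ h; exact Fin.ext h
      rw [Nat.card_Ico] at h1
      exact h1
    have hcc := Finset.card_le_card hsub
    have hba : n - r*(k-1) ≤ (r-1) * m := cld_mul_ge _ _ (by omega)
    have h5 : (m-1)*(r-1) + (r-1) = (r-1)*m := by
      have : ((m-1)+1)*(r-1) = (m-1)*(r-1) + (r-1) := by ring
      rw [mul_comm (r-1) m, ← this]
      congr 2
      omega
    omega

lemma exists_equiv {n l r : ℕ} (hr : 2 ≤ r) (hn0 : 0 < n)
    (P : Fin l → Finset (Fin n)) (hP : IsPartition P) (hPc : ∀ i, (P i).card ≤ r) :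
    ∃ e : Fin n ≃ Fin n, ∀ σ : Finset (Fin n), Stable n r σ →
      Transversal P (σ.image e) := by
  classical
  set idx : Fin n → Fin l := fun z => (hP.2 z).choose with hidxdef
  have hidx : ∀ z, z ∈ P (idx z) := fun z => (hP.2 z).choose_spec
  have hidxu : ∀ z i, z ∈ P i → idx z = i := by
    intro z i hz
    by_contra h
    exact Finset.disjoint_left.mp (hP.1 _ _ h) (hidx z) hz
  set key : Fin n → ℕ := fun z => z.val + (idx z).val * n with hkeydef
  have hkeymod : ∀ z, key z % n = z.val := by
    intro z
    simp [hkeydef, Nat.add_mul_mod_self_right, Nat.mod_eq_of_lt z.isLt]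
  have hkeydiv : ∀ z, key z / n = (idx z).val := by
    intro z
    simp [hkeydef, Nat.add_mul_div_right _ _ hn0, Nat.div_eq_of_lt z.isLt]
  have hkeyinj : Function.Injective key := by
    intro a b h
    have := hkeymod a
    rw [h, hkeymod b] at this
    exact Fin.ext this.symm
  set rank : Fin n → ℕ := fun z => (univ.filter fun y => key y < key z).card with hrankdef
  have hrlt : ∀ z, rank z < n := by
    intro z
    have hsub : (univ.filter fun y => key y < key z) ⊆ univ.erase z := by
      intro w hw
      simp only [Finset.mem_filter] at hw
      simp only [Finset.mem_erase, Finset.mem_univ, and_true]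
      intro h; rw [h] at hw; omega
    calc rank z ≤ (univ.erase z).card := Finset.card_le_card hsub
    _ = n - 1 := by rw [Finset.card_erase_of_mem (mem_univ _), card_univ, Fintype.card_fin]
    _ < n := by omega
  have hrmono : ∀ a b, key a < key b → rank a < rank b := by
    intro a b hab
    apply Finset.card_lt_card
    constructor
    · intro w hw
      simp only [Finset.mem_filter, Finset.mem_univ, true_and] at hw ⊢
      omega
    · intro hsub
      have := hsub (Finset.mem_filter.mpr ⟨mem_univ a, hab⟩)
      simp only [Finset.mem_filter] at this
      omega
  set rf : Fin n → Fin n := fun z => ⟨rank z, hrlt z⟩ with hrfdef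
  have hrfinj : Function.Injective rf := by
    intro a b h
    have h' : rank a = rank b := congrArg Fin.val h
    rcases lt_trichotomy (key a) (key b) with h1 | h1 | h1
    · exact absurd h' (by have := hrmono a b h1; omega)
    · exact hkeyinj h1
    · exact absurd h' (by have := hrmono b a h1; omega)
  have hrfbij : Function.Bijective rf := Finite.injective_iff_bijective.mp hrfinj
  set e0 : Fin n ≃ Fin n := Equiv.ofBijective rf hrfbij with he0
  have hgap : ∀ a b : Fin n, ∀ i, a ∈ P i → b ∈ P i → key a < key b →
      rank b ≤ rank a + (r - 1) := by
    intro a b i ha hb hab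
    have hia : idx a = i := hidxu a i ha
    have hib : idx b = i := hidxu b i hb
    set D := univ.filter (fun z : Fin n => key a ≤ key z ∧ key z < key b) with hD
    have hsplit : (univ.filter fun y => key y < key b) ⊆
        (univ.filter fun y => key y < key a) ∪ D := by
      intro w hw
      simp only [Finset.mem_filter, Finset.mem_union, Finset.mem_univ, true_and, hD] at hw ⊢
      omega
    have hDsub : D ⊆ (P i).erase b := by
      intro z hz
      simp only [hD, Finset.mem_filter, Finset.mem_univ, true_and] at hz
      have hzi : (idx z).val = i.val := by
        have h1 : key z / n = (idx z).val := hkeydiv z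
        have h2 : key a = a.val + i.val * n := by rw [hkeydef]; simp [hia]
        have h3 : key b = b.val + i.val * n := by rw [hkeydef]; simp [hib]
        have h4 : i.val * n ≤ key z := by
          have := a.isLt; omega
        have h5 : key z < (i.val + 1) * n := by
          rw [add_mul, one_mul]
          have := b.isLt
          omega
        have := Nat.div_eq_of_lt_le h4 h5
        omega
      have hzP : z ∈ P i := by
        have : idx z = i := Fin.ext hzi
        rw [← this]; exact hidx z
      refine Finset.mem_erase.mpr ⟨?_, hzP⟩
      intro h; rw [h] at hz; omega
    have hDcard : D.card ≤ r - 1 := by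
      calc D.card ≤ ((P i).erase b).card := Finset.card_le_card hDsub
      _ = (P i).card - 1 := Finset.card_erase_of_mem hb
      _ ≤ r - 1 := by have := hPc i; omega
    calc rank b ≤ ((univ.filter fun y => key y < key a) ∪ D).card :=
          Finset.card_le_card hsplit
    _ ≤ rank a + D.card := Finset.card_union_le _ _
    _ ≤ rank a + (r-1) := by omega
  refine ⟨e0.symm, ?_⟩
  intro σ hst i
  rw [Finset.card_le_one]
  intro a ha b hb
  simp only [Finset.mem_inter, Finset.mem_image] at ha hb
  obtain ⟨⟨xa, hxa, hea⟩, hpa⟩ := ha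
  obtain ⟨⟨xb, hxb, heb⟩, hpb⟩ := hb
  by_contra hab
  have hxea : e0 a = xa := by rw [← hea]; exact e0.apply_symm_apply xa
  have hxeb : e0 b = xb := by rw [← heb]; exact e0.apply_symm_apply xb
  have hkey : key a ≠ key b := fun h => hab (hkeyinj h)
  have main : ∀ u v : Fin n, u ∈ P i → v ∈ P i → e0 u ∈ σ → e0 v ∈ σ →
      key u < key v → False := by
    intro u v hu hv hus hvs huv
    have h1 : rank u < rank v := hrmono u v huv
    have h2 : rank v ≤ rank u + (r - 1) := hgap u v i hu hv huv
    have hne : e0 u ≠ e0 v := by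
      intro h
      have : u = v := e0.injective h
      rw [this] at huv; omega
    have hst' := hst _ hus _ hvs hne
    have hvu : (e0 u).val = rank u := rfl
    have hvv : (e0 v).val = rank v := rfl
    have hcd : cycDist n (e0 u) (e0 v) ≤ r - 1 := by
      unfold cycDist
      rw [hvu, hvv]
      omega
    omega
  rcases lt_trichotomy (key a) (key b) with h | h | h
  · exact main a b hpa hpb (hxea ▸ hxa) (hxeb ▸ hxb) h
  · exact hkey h
  · exact main b a hpb hpa (hxeb ▸ hxb) (hxea ▸ hxa) h

end Aux

/-- assuming Schrijver's theorem and closure of Ziegler's conjecture under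
products, for `r = 2^t` a power of two any partition with parts of size at most `r`
satisfies `χ(KG^r(n,k;P)) = ⌈(n - r(k-1))/(r-1)⌉`. -/
theorem stmt6
    (hSch : ∀ n k : ℕ, 1 ≤ k → 2 * k ≤ n → chiStab 2 n k = n - 2 * (k - 1))
    (hprod : ∀ r1 r2 : ℕ, 2 ≤ r1 → 2 ≤ r2 → Ziegler r1 → Ziegler r2 → Ziegler (r1 * r2))
    (t k n l : ℕ) (ht : 1 ≤ t) (hk : 1 ≤ k) (hn : 2 ^ t * k ≤ n)
    (P : Fin l → Finset (Fin n)) (hP : IsPartition P) (hPc : ∀ i, (P i).card ≤ 2 ^ t) :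
    chiP (2 ^ t) n k P = cld (n - 2 ^ t * (k - 1)) (2 ^ t - 1) := by
  classical
  have hr2 : 2 ≤ 2^t := by
    calc 2 = 2^1 := (pow_one 2).symm
    _ ≤ 2^t := Nat.pow_le_pow_right (by omega) ht
  set r := 2^t with hrdef
  have hZ2 : Ziegler 2 := by
    intro n' k' hk' hn'
    rw [hSch n' k' hk' hn']
    unfold cld
    omega
  have hZpow : ∀ s : ℕ, 1 ≤ s → Ziegler (2^s) := by
    intro s hs
    induction s with
    | zero => exact absurd hs (by omega)
    | succ s ih =>
      rcases Nat.eq_or_lt_of_le hs with h | h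
      · rw [← h, pow_one]; exact hZ2
      · have hs' : 1 ≤ s := by omega
        have h2s : 2 ≤ 2^s := by
          calc 2 = 2^1 := (pow_one 2).symm
          _ ≤ 2^s := Nat.pow_le_pow_right (by omega) hs'
        rw [pow_succ]
        exact hprod (2^s) 2 h2s (le_refl 2) (ih hs') hZ2
  have hn0 : 0 < n := by
    have : 2*1 ≤ r*k := Nat.mul_le_mul hr2 hk
    omega
  set m := cld (n - r*(k-1)) (r-1) with hmdef
  obtain ⟨c0, hc0⟩ := greedy r n k hr2 hk hn
  have hc0P : ProperP r n k P c0 := fun A h1 _ h2 => hc0 A h1 h2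
  have hSne : {m' | ∃ c : Finset (Fin n) → Fin m', ProperP r n k P c}.Nonempty :=
    ⟨m, c0, hc0P⟩
  have hub : chiP r n k P ≤ m := Nat.sInf_le ⟨c0, hc0P⟩
  have hstab : chiStab r n k = m := hZpow t ht n k hk hn
  obtain ⟨e, he⟩ := exists_equiv hr2 hn0 P hP hPc
  have hmem : chiP r n k P ∈
      {m' | ∃ c : Finset (Fin n) → Fin m', ProperP r n k P c} := Nat.sInf_mem hSne
  obtain ⟨c, hc⟩ := hmem
  have hc' : ProperStab r n k (fun σ => c (σ.image e)) := by
    intro A hcard hstable hdis hall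
    refine hc (fun j => (A j).image e) ?_ ?_ ?_ ?_
    · intro j; rw [Finset.card_image_of_injective _ e.injective, hcard]
    · intro j; exact he _ (hstable j)
    · intro j j' h; exact (Finset.disjoint_image e.injective).mpr (hdis j j' h)
    · exact fun j j' => hall j j'
  have hlb : chiStab r n k ≤ chiP r n k P := Nat.sInf_le ⟨_, hc'⟩
  omega
end

section
/- Let r ≥ 2, and suppose for every prime p dividing r and all k ≥ 1, n ≥ pk, and partitions P of [n] with parts of size at most p-1 (resp. at most 2 when p = 2) one has χ(KG^p(n,k;P)) ≥ ⌈(n-p(k-1))/(p-1)⌉. Then for all k ≥ 1, n ≥ rk, and partitions P of [n] with parts of size at most b(r), χ(KG^r(n,k;P)) = ⌈(n - r(k-1))/(r-1)⌉. -/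
open Finset

/-! ### Auxiliary lemmas for stmt7 -/

lemma lt_div_succ_mul (a b : ℕ) (hb : 0 < b) : a < (a / b + 1) * b := by
  calc a = b * (a / b) + a % b := (Nat.div_add_mod a b).symm
    _ < b * (a / b) + b := by have := Nat.mod_lt a hb; omega
    _ = (a / b + 1) * b := by ring

lemma le_cld_mul (a b : ℕ) (hb : 1 ≤ b) : a ≤ cld a b * b := by
  unfold cld
  have h := lt_div_succ_mul (a + b - 1) b hb
  have : (a + b - 1) / b * b + b = ((a + b - 1)/b + 1) * b := by ring
  omega

lemma lt_cld (a b C : ℕ) (hb : 1 ≤ b) (h : b * C < a) : C < cld a b := by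
  by_contra hc
  push_neg at hc
  have h1 := le_cld_mul a b hb
  have h2 : cld a b * b ≤ C * b := Nat.mul_le_mul_right b hc
  have : C * b = b * C := by ring
  omega

lemma bfun_pos (n : ℕ) : 0 < bfun n := by
  unfold bfun
  rw [Finsupp.prod]
  apply Finset.prod_pos
  intro p hp
  have hpp : p.Prime := Nat.prime_of_mem_primeFactors (by simpa [Nat.support_factorization] using hp)
  apply pow_pos
  split
  · norm_num
  · have := hpp.two_le; omega

lemma bfun_prime (p : ℕ) (hp : p.Prime) : bfun p = if p = 2 then 2 else p - 1 := by
  unfold bfun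
  rw [hp.factorization, Finsupp.prod_single_index (by simp)]
  simp

lemma bfun_mul (a b : ℕ) (ha : a ≠ 0) (hb : b ≠ 0) : bfun (a * b) = bfun a * bfun b := by
  unfold bfun
  rw [Nat.factorization_mul ha hb]
  exact Finsupp.prod_add_index (by simp) (by intros; rw [pow_add])

lemma mul_pred_add (r k : ℕ) (hk : 1 ≤ k) : r * (k-1) + r = r * k := by
  have h : (k - 1) + 1 = k := by omega
  calc r * (k-1) + r = r * ((k-1)+1) := by ring
    _ = r * k := by rw [h]

lemma arith_upper (n r rk1 rk X L : ℕ) (hr : 2 ≤ r) (hrk : rk1 + r = rk)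
    (hn : rk ≤ n) (hx : n - rk1 ≤ X) (hL : X - (r-1) ≤ L) (hub : rk ≤ n - L) : False := by
  omega

lemma cld_pred_mul_lt (a b : ℕ) (ha : 1 ≤ a) (hb : 1 ≤ b) : (cld a b - 1) * b < a := by
  unfold cld
  have h1 : (a + b - 1) / b * b ≤ a + b - 1 := Nat.div_mul_le_self _ _
  have h2 : ((a + b - 1) / b - 1) * b = (a + b - 1) / b * b - b := by
    rw [Nat.sub_mul, one_mul]
  omega

/-- Upper bound: explicit proper coloring of `KG^r(n,k;P)` (in fact of `KG^r(n,k)`). -/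
lemma upperP (r n k : ℕ) (hr : 2 ≤ r) (hk : 1 ≤ k) (hn : r * k ≤ n) {l : ℕ}
    (P : Fin l → Finset (Fin n)) :
    ∃ c : Finset (Fin n) → Fin (cld (n - r*(k-1)) (r-1)), ProperP r n k P c := by
  set b := r - 1 with hb
  set a := n - r*(k-1) with hadef
  set M := cld a b with hM
  have hb1 : 1 ≤ b := by omega
  have hrk := mul_pred_add r k hk
  have ha : r ≤ a := by omega
  have haM : a ≤ M * b := le_cld_mul a b hb1
  have hM1 : 1 ≤ M := by
    rcases Nat.eq_zero_or_pos M with h | h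
    · rw [h] at haM; omega
    · exact h
  classical
  set f : Finset (Fin n) → ℕ := fun σ => if h : σ.Nonempty then (σ.min' h).val else 0 with hf
  refine ⟨fun σ => ⟨min (M-1) (f σ / b), lt_of_le_of_lt (min_le_left _ _) (by omega)⟩, ?_⟩
  intro A hcard htrans hdisj hmono
  have hne : ∀ j, (A j).Nonempty := fun j => card_pos.mp (by rw [hcard j]; omega)
  set mj : Fin r → ℕ := fun j => ((A j).min' (hne j)).val with hmj
  have hfA : ∀ j, f (A j) = mj j := fun j => dif_pos (hne j)
  have z : Fin r := ⟨0, by omega⟩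
  set v := min (M-1) (mj z / b) with hv
  have hveq : ∀ j, min (M-1) (mj j / b) = v := by
    intro j
    have := hmono j z
    have h2 : min (M-1) (f (A j) / b) = min (M-1) (f (A z) / b) := congrArg Fin.val this
    rw [hfA, hfA] at h2
    rw [hv, h2]
  have hminj : ∀ j j', j ≠ j' → mj j ≠ mj j' := by
    intro j j' hne' heq
    have h1 : (A j).min' (hne j) ∈ A j := min'_mem _ _
    have h2 : (A j').min' (hne j') ∈ A j' := min'_mem _ _
    have : (A j).min' (hne j) = (A j').min' (hne j') := Fin.ext heq
    exact (Finset.disjoint_left.mp (hdisj j j' hne')) h1 (this ▸ h2)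
  have hvle : v ≤ M - 1 := min_le_left _ _
  rcases lt_or_eq_of_le hvle with hvlt | hveqM
  · have hdiv : ∀ j, mj j / b = v := by
      intro j
      have h := hveq j
      rcases le_or_gt (M-1) (mj j / b) with hle | hlt
      · rw [min_eq_left hle] at h; omega
      · rw [min_eq_right (le_of_lt hlt)] at h; exact h
    have hcard' := Finset.card_le_card_of_injOn (fun j => mj j)
      (fun j _ => by
        rw [Finset.mem_coe, Finset.mem_Ico]
        constructor
        · rw [← hdiv j]; exact Nat.div_mul_le_self _ _
        · rw [← hdiv j]; exact lt_div_succ_mul _ _ (by omega))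
      (fun j _ j' _ h => by
        by_contra hne'
        exact hminj j j' hne' h)
      (s := (univ : Finset (Fin r))) (t := Finset.Ico (v*b) ((v+1)*b))
    rw [Finset.card_univ, Fintype.card_fin, Nat.card_Ico] at hcard'
    have : (v+1)*b = v*b + b := by ring
    omega
  · have hLlow : ∀ j, (M-1)*b ≤ mj j := by
      intro j
      have h := hveq j
      rw [hveqM] at h
      have hle : M - 1 ≤ mj j / b := by
        rcases le_or_gt (M-1) (mj j / b) with hle | hlt
        · exact hle
        · rw [min_eq_right (le_of_lt hlt)] at h; omega
      exact (Nat.le_div_iff_mul_le (by omega)).mp hle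
    set L := (M-1)*b with hL
    set U := (univ : Finset (Fin r)).biUnion A with hU
    have hcardU : U.card = r * k := by
      rw [hU, Finset.card_biUnion (fun j _ j' _ h => hdisj j j' h)]
      simp [hcard, Finset.sum_const]
    have hub : U.card ≤ n - L := by
      have := Finset.card_le_card_of_injOn (fun x => x.val)
        (fun x hx => by
          rw [Finset.mem_coe, Finset.mem_Ico]
          obtain ⟨j, _, hj⟩ := Finset.mem_biUnion.mp hx
          refine ⟨le_trans (hLlow j) ?_, x.isLt⟩
          exact Finset.min'_le _ _ hj)
        (fun x _ y _ h => Fin.ext h)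
        (s := U) (t := Finset.Ico L n)
      rwa [Nat.card_Ico] at this
    rw [hcardU] at hub
    have hXL : M * b - b ≤ L := by
      rw [hL, Nat.sub_mul, one_mul]
    exact arith_upper n r (r*(k-1)) (r*k) (M*b) L hr hrk hn haM hXL hub


/-- Main induction: for any `s ∣ r`, `s ≥ 2`, any coloring of subsets with too few colors
admits a monochromatic `s`-tuple of disjoint transversal `k`-subsets of `S`. -/
lemma bigL (r : ℕ)
    (H : ∀ p : ℕ, p.Prime → p ∣ r →
      ∀ (k n l : ℕ) (P : Fin l → Finset (Fin n)), 1 ≤ k → p * k ≤ n →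
        IsPartition P → (∀ i, (P i).card ≤ if p = 2 then 2 else p - 1) →
        cld (n - p * (k - 1)) (p - 1) ≤ chiP p n k P) :
    ∀ s : ℕ, 2 ≤ s → s ∣ r →
    ∀ (k C N l : ℕ) (S : Finset (Fin N)) (P : Fin l → Finset (Fin N))
      (c : Finset (Fin N) → Fin C),
      1 ≤ k →
      (∀ i j, i ≠ j → Disjoint (P i) (P j)) →
      (∀ i, P i ⊆ S) →
      (∀ x ∈ S, ∃ i, x ∈ P i) →
      (∀ i, (P i).card ≤ bfun s) →
      s * (k-1) + (s-1) * C < S.card →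
      ∃ A : Fin s → Finset (Fin N),
        (∀ j, A j ⊆ S) ∧ (∀ j, (A j).card = k) ∧ (∀ j, Transversal P (A j)) ∧
        (∀ j j', j ≠ j' → Disjoint (A j) (A j')) ∧ (∀ j j', c (A j) = c (A j')) := by
  intro s
  induction s using Nat.strong_induction_on with
  | _ s IH =>
  intro hs2 hsr k C N l S P c hk hdisj hsub hcov hpc hsize
  classical
  have hC1 : 1 ≤ C := by have := (c ∅).isLt; omega
  by_cases hsp : s.Prime
  · -- prime case: transport to `Fin S.card` and use `H`
    have hsk : s * k ≤ S.card := by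
      have h1 := mul_pred_add s k hk
      have h2 : (s-1) * 1 ≤ (s-1) * C := Nat.mul_le_mul_left _ hC1
      omega
    have hcld : C < cld (S.card - s*(k-1)) (s-1) := by
      apply lt_cld _ _ _ (by omega)
      omega
    set e := S.equivFin with he
    set emb : Fin S.card → Fin N := fun t => (e.symm t : Fin N) with hemb
    have hembinj : Function.Injective emb := fun a b h => e.symm.injective (Subtype.ext h)
    have hembS : ∀ t, emb t ∈ S := fun t => (e.symm t).2
    set P' : Fin l → Finset (Fin S.card) :=
      (fun i => univ.filter fun t => emb t ∈ P i) with hP'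
    have hpart' : IsPartition P' := by
      constructor
      · intro i j hij
        rw [Finset.disjoint_left]
        intro t ht ht'
        exact (Finset.disjoint_left.mp (hdisj i j hij))
          (mem_filter.mp ht).2 (mem_filter.mp ht').2
      · intro t
        obtain ⟨i, hi⟩ := hcov (emb t) (hembS t)
        exact ⟨i, mem_filter.mpr ⟨mem_univ _, hi⟩⟩
    have hpc' : ∀ i, (P' i).card ≤ if s = 2 then 2 else s - 1 := by
      intro i
      have h1 : (P' i).card ≤ (P i).card :=
        Finset.card_le_card_of_injOn emb (fun t ht => (mem_filter.mp ht).2)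
          (fun a _ b _ h => hembinj h)
      rw [← bfun_prime s hsp]
      exact le_trans h1 (hpc i)
    have hH := H s hsp hsr k S.card l P' hk hsk hpart' hpc'
    have hCchi : C < chiP s S.card k P' := lt_of_lt_of_le hcld hH
    set c' : Finset (Fin S.card) → Fin C := fun σ => c (σ.image emb) with hc'
    have himp : ¬ ProperP s S.card k P' c' := by
      intro hp
      have hle : chiP s S.card k P' ≤ C := by
        unfold chiP
        exact Nat.sInf_le ⟨c', hp⟩
      omega
    unfold ProperP at himp
    push_neg at himp
    obtain ⟨A', h1, h2, h3, h4⟩ := himp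
    refine ⟨fun j => (A' j).image emb, ?_, ?_, ?_, ?_, ?_⟩
    · intro j x hx
      obtain ⟨t, _, rfl⟩ := mem_image.mp hx
      exact hembS t
    · intro j
      rw [Finset.card_image_of_injective _ hembinj]
      exact h1 j
    · intro j i
      have hsub2 : (A' j).image emb ∩ P i ⊆ ((A' j) ∩ P' i).image emb := by
        intro x hx
        obtain ⟨hx1, hx2⟩ := mem_inter.mp hx
        obtain ⟨t, ht, rfl⟩ := mem_image.mp hx1
        exact mem_image.mpr ⟨t, mem_inter.mpr ⟨ht, mem_filter.mpr ⟨mem_univ _, hx2⟩⟩, rfl⟩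
      calc ((A' j).image emb ∩ P i).card ≤ (((A' j) ∩ P' i).image emb).card :=
            Finset.card_le_card hsub2
        _ ≤ ((A' j) ∩ P' i).card := Finset.card_image_le
        _ ≤ 1 := h2 j i
    · intro j j' hjj
      rw [Finset.disjoint_left]
      intro x hx hx'
      obtain ⟨t, ht, rfl⟩ := mem_image.mp hx
      obtain ⟨t', ht', htt⟩ := mem_image.mp hx'
      have : t' = t := hembinj htt
      exact (Finset.disjoint_left.mp (h3 j j' hjj)) ht (this ▸ ht')
    · intro j j'
      exact h4 j j'
  · -- composite case
    set p := s.minFac with hpdef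
    have hp : p.Prime := Nat.minFac_prime (by omega)
    set u := s / p with hudef
    have hs : p * u = s := Nat.mul_div_cancel' (Nat.minFac_dvd s)
    have hu0 : u ≠ 0 := by intro h; rw [h, mul_zero] at hs; omega
    have hu1 : u ≠ 1 := by intro h; rw [h, mul_one] at hs; exact hsp (hs ▸ hp)
    have hu2 : 2 ≤ u := (Nat.two_le_iff u).mpr ⟨hu0, hu1⟩
    have hp2 := hp.two_le
    have hult : u < s := by nlinarith
    have hplt : p < s := by
      have h1 : p ≠ s := fun h => hsp (h ▸ hp)
      have h2 : p ≤ s := Nat.minFac_le (by omega)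
      omega
    have hpr : p ∣ r := dvd_trans (Nat.minFac_dvd s) hsr
    have hur : u ∣ r := dvd_trans ⟨p, by rw [← hs]; ring⟩ hsr
    set bp := bfun p with hbpdef
    set bu := bfun u with hbudef
    have hbps : bfun s = bp * bu := by
      rw [← hs, bfun_mul p u (by omega) hu0]
    have hbp1 : 1 ≤ bp := bfun_pos p
    have hbu1 : 1 ≤ bu := bfun_pos u
    -- ranks within parts
    set rank : Fin l → Fin N → ℕ :=
      fun i x => ((P i).filter (fun y => y < x)).card with hrank
    have hrankmono : ∀ i, ∀ x ∈ P i, ∀ y ∈ P i, x < y → rank i x < rank i y := by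
      intro i x hx y hy hxy
      apply Finset.card_lt_card
      have hss : (P i).filter (fun z => z < x) ⊆ (P i).filter (fun z => z < y) := by
        intro z hz
        rw [mem_filter] at *
        exact ⟨hz.1, lt_trans hz.2 hxy⟩
      refine (Finset.ssubset_iff_of_subset hss).mpr ⟨x, mem_filter.mpr ⟨hx, hxy⟩, ?_⟩
      intro h
      exact lt_irrefl x (mem_filter.mp h).2
    have hrankinj : ∀ i, ∀ x ∈ P i, ∀ y ∈ P i, rank i x = rank i y → x = y := by
      intro i x hx y hy hxy
      rcases lt_trichotomy x y with h | h | h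
      · exact absurd hxy (Nat.ne_of_lt (hrankmono i x hx y hy h))
      · exact h
      · exact absurd hxy.symm (Nat.ne_of_lt (hrankmono i y hy x hx h))
    have hranklt : ∀ i, ∀ x ∈ P i, rank i x < (P i).card := by
      intro i x hx
      apply Finset.card_lt_card
      refine (Finset.ssubset_iff_of_subset (Finset.filter_subset _ _)).mpr ⟨x, hx, ?_⟩
      intro h
      exact lt_irrefl x (mem_filter.mp h).2
    -- chunks
    set Q : Fin l × Fin bu → Finset (Fin N) :=
      fun q => (P q.1).filter
        (fun x => q.2.val * bp ≤ rank q.1 x ∧ rank q.1 x < (q.2.val+1) * bp) with hQ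
    set Q' : Fin (l * bu) → Finset (Fin N) := fun t => Q (finProdFinEquiv.symm t) with hQ'
    have hQsubP : ∀ q, Q q ⊆ P q.1 := fun q => Finset.filter_subset _ _
    have hQcard : ∀ q, (Q q).card ≤ bp := by
      intro q
      have hc2 := Finset.card_le_card_of_injOn (rank q.1)
        (fun x hx => by
          have hx' := mem_filter.mp hx
          exact Finset.mem_Ico.mpr ⟨hx'.2.1, hx'.2.2⟩)
        (fun x hx y hy h => hrankinj q.1 x (hQsubP q hx) y (hQsubP q hy) h)
        (s := Q q) (t := Finset.Ico (q.2.val*bp) ((q.2.val+1)*bp))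
      rw [Nat.card_Ico] at hc2
      have h2 : (q.2.val+1)*bp = q.2.val*bp + bp := by ring
      omega
    have hQdisj : ∀ q q', q ≠ q' → Disjoint (Q q) (Q q') := by
      rintro ⟨i,j⟩ ⟨i',j'⟩ hne
      by_cases hi : i = i'
      · subst hi
        have hj : j.val ≠ j'.val := by
          intro h
          exact hne (by rw [Fin.ext h])
        rw [Finset.disjoint_left]
        intro x hx hx'
        have h1 : j.val * bp ≤ rank i x ∧ rank i x < (j.val+1)*bp := (mem_filter.mp hx).2
        have h2 : j'.val * bp ≤ rank i x ∧ rank i x < (j'.val+1)*bp := (mem_filter.mp hx').2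
        rcases Nat.lt_or_ge j.val j'.val with h | h
        · have h3 : (j.val+1)*bp ≤ j'.val*bp := Nat.mul_le_mul_right _ (by omega)
          omega
        · have hlt : j'.val < j.val := by omega
          have h3 : (j'.val+1)*bp ≤ j.val*bp := Nat.mul_le_mul_right _ (by omega)
          omega
      · exact Finset.disjoint_of_subset_left (hQsubP _)
          (Finset.disjoint_of_subset_right (hQsubP _) (hdisj i i' hi))
    have hQcov : ∀ i, ∀ x ∈ P i, ∃ j : Fin bu, x ∈ Q (i, j) := by
      intro i x hx
      have h1 : rank i x < bp * bu :=
        lt_of_lt_of_le (hranklt i x hx) (le_trans (hpc i) (le_of_eq hbps))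
      refine ⟨⟨rank i x / bp, Nat.div_lt_of_lt_mul h1⟩, ?_⟩
      exact mem_filter.mpr ⟨hx, Nat.div_mul_le_self _ _, lt_div_succ_mul _ _ (by omega)⟩
    set k₂ := u*(k-1) + (u-1)*C + 1 with hk₂
    set Cond : Finset (Fin N) → Prop :=
      fun S' => S' ⊆ S ∧ S'.card = k₂ ∧ Transversal Q' S' with hCond
    have inner : ∀ S', Cond S' → ∃ A' : Fin u → Finset (Fin N),
        (∀ j, A' j ⊆ S') ∧ (∀ j, (A' j).card = k) ∧ (∀ j, Transversal P (A' j)) ∧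
        (∀ j j', j ≠ j' → Disjoint (A' j) (A' j')) ∧ (∀ j j', c (A' j) = c (A' j')) := by
      rintro S' ⟨hs1, hs2c, hs3⟩
      have hparts : ∀ i, (P i ∩ S').card ≤ bu := by
        intro i
        have hsubB : P i ∩ S' ⊆ (univ : Finset (Fin bu)).biUnion (fun j => Q (i,j) ∩ S') := by
          intro x hx
          obtain ⟨hx1, hx2⟩ := mem_inter.mp hx
          obtain ⟨j, hj⟩ := hQcov i x hx1
          exact mem_biUnion.mpr ⟨j, mem_univ _, mem_inter.mpr ⟨hj, hx2⟩⟩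
        calc (P i ∩ S').card ≤ _ := Finset.card_le_card hsubB
          _ ≤ ∑ j : Fin bu, (Q (i,j) ∩ S').card := Finset.card_biUnion_le
          _ ≤ ∑ _j : Fin bu, 1 := Finset.sum_le_sum (fun j _ => by
              have ht := hs3 (finProdFinEquiv (i,j))
              have heq : Q' (finProdFinEquiv (i,j)) = Q (i,j) :=
                congrArg Q (Equiv.symm_apply_apply finProdFinEquiv (i,j))
              rw [heq] at ht
              calc (Q (i,j) ∩ S').card = (S' ∩ Q (i,j)).card := by rw [Finset.inter_comm]
                _ ≤ 1 := ht)
          _ = bu := by simp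
      have hres := IH u hult hu2 hur k C N l S' (fun i => P i ∩ S') c hk
        (fun i j hij => Finset.disjoint_of_subset_left Finset.inter_subset_left
          (Finset.disjoint_of_subset_right Finset.inter_subset_left (hdisj i j hij)))
        (fun i => Finset.inter_subset_right)
        (fun x hx => by
          obtain ⟨i, hi⟩ := hcov x (hs1 hx)
          exact ⟨i, mem_inter.mpr ⟨hi, hx⟩⟩)
        hparts
        (by rw [hs2c, hk₂]; omega)
      obtain ⟨A', a1, a2, a3, a4, a5⟩ := hres
      refine ⟨A', a1, a2, ?_, a4, a5⟩
      intro j i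
      have hsub' : A' j ∩ P i ⊆ A' j ∩ (P i ∩ S') := by
        intro x hx
        obtain ⟨h1', h2'⟩ := mem_inter.mp hx
        exact mem_inter.mpr ⟨h1', mem_inter.mpr ⟨h2', a1 j h1'⟩⟩
      exact le_trans (Finset.card_le_card hsub') (a3 j i)
    set z : Fin u := ⟨0, by omega⟩ with hz
    set c' : Finset (Fin N) → Fin C :=
      fun S' => if h : Cond S' then c ((Classical.choose (inner S' h)) z) else c ∅ with hc'
    have houter := IH p hplt hp2 hpr k₂ C N (l * bu) S Q' c' (by omega)
      (fun t t' htt => hQdisj _ _ (fun h => htt ((finProdFinEquiv.symm).injective h)))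
      (fun t => subset_trans (hQsubP _) (hsub _))
      (fun x hx => by
        obtain ⟨i, hi⟩ := hcov x hx
        obtain ⟨j, hj⟩ := hQcov i x hi
        refine ⟨finProdFinEquiv (i,j), ?_⟩
        have heq : Q' (finProdFinEquiv (i,j)) = Q (i,j) :=
          congrArg Q (Equiv.symm_apply_apply finProdFinEquiv (i,j))
        rw [heq]
        exact hj)
      (fun t => le_trans (hQcard _) (le_of_eq rfl))
      (by
        have e1 : k₂ - 1 = u*(k-1) + (u-1)*C := by omega
        have e4 : p*(u-1) + p = p*u := by
          have h : (u-1)+1 = u := by omega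
          calc p*(u-1)+p = p*((u-1)+1) := by ring
            _ = p*u := by rw [h]
        have e5 : p*(u-1) + (p-1) = p*u - 1 := by omega
        calc p*(k₂-1) + (p-1)*C = p*u*(k-1) + (p*(u-1) + (p-1))*C := by rw [e1]; ring
          _ = p*u*(k-1) + (p*u-1)*C := by rw [e5]
          _ = s*(k-1) + (s-1)*C := by rw [hs]
          _ < S.card := hsize)
    obtain ⟨T, t1, t2, t3, t4, t5⟩ := houter
    have hcondT : ∀ j, Cond (T j) := fun j => ⟨t1 j, t2 j, t3 j⟩
    set AA : Fin p → Fin u → Finset (Fin N) :=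
      fun j => Classical.choose (inner (T j) (hcondT j)) with hAA
    have spec : ∀ j, (∀ j', AA j j' ⊆ T j) ∧ (∀ j', (AA j j').card = k) ∧
        (∀ j', Transversal P (AA j j')) ∧
        (∀ j' j'', j' ≠ j'' → Disjoint (AA j j') (AA j j'')) ∧
        (∀ j' j'', c (AA j j') = c (AA j j'')) :=
      fun j => Classical.choose_spec (inner (T j) (hcondT j))
    have hcTj : ∀ j, c' (T j) = c (AA j z) := fun j => dif_pos (hcondT j)
    set q : Fin s → Fin p × Fin u := fun t => finProdFinEquiv.symm (Fin.cast hs.symm t) with hq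
    have hqinj : Function.Injective q := by
      intro a b h
      have h2 : Fin.cast hs.symm a = Fin.cast hs.symm b := (finProdFinEquiv.symm).injective h
      exact Fin.ext (by simpa using congrArg Fin.val h2)
    refine ⟨fun t => AA (q t).1 (q t).2, ?_, ?_, ?_, ?_, ?_⟩
    · intro t
      exact subset_trans ((spec (q t).1).1 (q t).2) (t1 (q t).1)
    · intro t
      exact (spec (q t).1).2.1 (q t).2
    · intro t
      exact (spec (q t).1).2.2.1 (q t).2
    · intro t t' htt
      show Disjoint (AA (q t).1 (q t).2) (AA (q t').1 (q t').2)
      have hq' : q t ≠ q t' := fun h => htt (hqinj h)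
      by_cases h1 : (q t).1 = (q t').1
      · have h2 : (q t).2 ≠ (q t').2 := by
          intro h
          exact hq' (Prod.ext h1 h)
        rw [← h1]
        exact (spec (q t).1).2.2.2.1 _ _ h2
      · exact Finset.disjoint_of_subset_left ((spec (q t).1).1 (q t).2)
          (Finset.disjoint_of_subset_right ((spec (q t').1).1 (q t').2) (t4 _ _ h1))
    · intro t t'
      have hcc : ∀ (j : Fin p) (j' : Fin u), c (AA j j') = c' (T j) := by
        intro j j'
        rw [hcTj j]
        exact (spec j).2.2.2.2 j' z
      calc c (AA (q t).1 (q t).2) = c' (T (q t).1) := hcc _ _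
        _ = c' (T (q t').1) := t5 _ _
        _ = c (AA (q t').1 (q t').2) := (hcc _ _).symm

/-- if the lower bound holds for every prime `p ∣ r` and partitions with parts
of size at most `p-1` (resp. `2` when `p = 2`), then Conjecture (parts) holds for `r` and
partitions with parts of size at most `b(r)`. -/
theorem stmt7 (r : ℕ) (hr : 2 ≤ r)
    (H : ∀ p : ℕ, p.Prime → p ∣ r →
      ∀ (k n l : ℕ) (P : Fin l → Finset (Fin n)), 1 ≤ k → p * k ≤ n →
        IsPartition P → (∀ i, (P i).card ≤ if p = 2 then 2 else p - 1) →
        cld (n - p * (k - 1)) (p - 1) ≤ chiP p n k P)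
    (k n l : ℕ) (P : Fin l → Finset (Fin n)) (hk : 1 ≤ k) (hn : r * k ≤ n)
    (hP : IsPartition P) (hPc : ∀ i, (P i).card ≤ bfun r) :
    chiP r n k P = cld (n - r * (k - 1)) (r - 1) := by
  have hM := upperP r n k hr hk hn P
  set M := cld (n - r * (k - 1)) (r - 1) with hMdef
  have hrk := mul_pred_add r k hk
  have ha : 1 ≤ n - r*(k-1) := by omega
  apply le_antisymm
  · unfold chiP
    exact Nat.sInf_le hM
  · by_contra hcon
    push_neg at hcon
    have hne : {m | ∃ c : Finset (Fin n) → Fin m, ProperP r n k P c}.Nonempty := ⟨M, hM⟩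
    have hmem : ∃ c : Finset (Fin n) → Fin (chiP r n k P), ProperP r n k P c := by
      unfold chiP
      exact Nat.sInf_mem hne
    obtain ⟨c, hc⟩ := hmem
    have hMb : (M-1)*(r-1) < n - r*(k-1) := cld_pred_mul_lt _ _ ha (by omega)
    have hCM : chiP r n k P ≤ M - 1 := by omega
    have hCb : (r-1)*(chiP r n k P) ≤ (r-1)*(M-1) := Nat.mul_le_mul_left _ hCM
    have hsize : r*(k-1) + (r-1)*(chiP r n k P) < n := by
      have hcomm : (M-1)*(r-1) = (r-1)*(M-1) := by ring
      omega
    have hL := bigL r H r hr dvd_rfl k (chiP r n k P) n l univ P c hk hP.1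
      (fun i => subset_univ _) (fun x _ => hP.2 x) hPc
      (by rw [card_univ, Fintype.card_fin]; exact hsize)
    obtain ⟨A, _, a2, a3, a4, a5⟩ := hL
    exact hc A a2 a3 a4 a5
end

section
/- Let r be a prime, k ≥ 1, n ≥ k, s = (s_1,...,s_n) with s_i ∈ {1,...,r-1}, and let t ≥ 1 be maximal such that s_j + s_{j+1} + ⋯ + s_{j+t-1} ≤ r(k-3)+2 for every j ∈ [n-t+1]. Assume χ(KG^r(N,k;P)_{(r(k-3)+2)-wide}) ≥ ⌈(N - r(k-1))/(r-1)⌉ where N = Σ_i s_i and P is the partition of [N] into consecutive blocks of sizes s_1,...,s_n. Then χ(KG^r_s(n,k)_{t-wide}) ≥ ⌈(N - r(k-1))/(r-1)⌉. -/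
open Finset

section Aux

variable {n : ℕ} (s : Fin n → ℕ)

lemma blockSum_split (a b c : ℕ) :
    blockSum s a (b + c) = blockSum s a b + blockSum s (a + b) c := by
  unfold blockSum
  rw [show a + (b + c) = (a + b) + c by omega,
    ← Finset.sum_Ico_consecutive _ (by omega : a ≤ a + b) (by omega : a + b ≤ a + b + c)]

lemma blockSum_zero_mono {a b : ℕ} (h : a ≤ b) :
    blockSum s 0 a ≤ blockSum s 0 b := by
  have := blockSum_split s 0 a (b - a)
  rw [show a + (b - a) = b by omega] at this
  omega

lemma blockSum_zero_succ (j : ℕ) :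
    blockSum s 0 (j + 1) = blockSum s 0 j + sE s j := by
  unfold blockSum
  rw [Nat.zero_add, Nat.zero_add, Finset.sum_Ico_succ_top (Nat.zero_le j)]

lemma le_blockSum {t : ℕ} (ht : t ≤ n) (hs : ∀ i, 1 ≤ s i) :
    t ≤ blockSum s 0 t := by
  have h : ∀ i ∈ Finset.Ico 0 (0 + t), 1 ≤ sE s i := by
    intro i hi
    simp only [Finset.mem_Ico] at hi
    have hin : i < n := by omega
    simpa [sE, hin] using hs ⟨i, hin⟩
  have := Finset.card_nsmul_le_sum (Finset.Ico 0 (0 + t)) (sE s) 1 h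
  simpa [blockSum] using this

lemma blockSum_total : blockSum s 0 n = ∑ i, s i := by
  unfold blockSum
  rw [show Finset.Ico 0 (0 + n) = Finset.range n by rw [Nat.zero_add, Finset.range_eq_Ico]]
  rw [← Fin.sum_univ_eq_sum_range]
  apply Finset.sum_congr rfl
  intro i _
  simp [sE, i.isLt]

/-- block index of `x`. -/
def bidx (x : ℕ) : ℕ := Nat.findGreatest (fun j => blockSum s 0 j ≤ x) n

lemma bidx_spec {x : ℕ} (hx : x < blockSum s 0 n) :
    bidx s x < n ∧ blockSum s 0 (bidx s x) ≤ x ∧ x < blockSum s 0 (bidx s x + 1) := by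
  have hle : bidx s x ≤ n := Nat.findGreatest_le n
  have hP : blockSum s 0 (bidx s x) ≤ x :=
    Nat.findGreatest_spec (P := fun j => blockSum s 0 j ≤ x) (Nat.zero_le n)
      (by simp [blockSum])
  have hlt : bidx s x < n := by
    rcases lt_or_eq_of_le hle with h | h
    · exact h
    · rw [h] at hP; omega
  have hnot : ¬ blockSum s 0 (bidx s x + 1) ≤ x :=
    Nat.findGreatest_is_greatest (P := fun j => blockSum s 0 j ≤ x)
      (Nat.lt_succ_self _) hlt
  exact ⟨hlt, hP, by omega⟩

end Aux

/-- lower bound for `χ(KG^r_s(n,k)_{t-wide})` via the wide transversal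
hypergraph for the consecutive-blocks partition. -/
theorem stmt11 (r n k t : ℕ) (hr : r.Prime) (hk : 1 ≤ k) (hn : k ≤ n)
    (s : Fin n → ℕ) (hs : ∀ i, 1 ≤ s i ∧ s i ≤ r - 1) (ht1 : 1 ≤ t) (htn : t ≤ n)
    (htle : ∀ j : ℕ, j + t ≤ n → (blockSum s j t : ℤ) ≤ r * ((k : ℤ) - 3) + 2)
    (htmax : ∀ t' : ℕ, t < t' → t' ≤ n →
      ¬ ∀ j : ℕ, j + t' ≤ n → (blockSum s j t' : ℤ) ≤ r * ((k : ℤ) - 3) + 2)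
    (N : ℕ) (hN : N = ∑ i, s i)
    (hlow : cld (N - r * (k - 1)) (r - 1) ≤ chiPW r N k (r * (k - 3) + 2) (blocks s N)) :
    cld (N - r * (k - 1)) (r - 1) ≤ chiSW r n k t s := by
  classical
  -- dispose of the degenerate case k ≤ 2
  rcases Nat.lt_or_ge k 3 with hk3 | hk3
  · exfalso
    have h0 := htle 0 (by omega)
    have h1 : t ≤ blockSum s 0 t := le_blockSum s htn (fun i => (hs i).1)
    have hr2 : 2 ≤ r := hr.two_le
    have : (blockSum s 0 t : ℤ) ≤ (r : ℤ) * ((k : ℤ) - 3) + 2 := by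
      simpa using h0
    have hrk : (r : ℤ) * ((k : ℤ) - 3) + 2 ≤ 2 - (r : ℤ) := by
      have : ((k : ℤ) - 3) ≤ -1 := by
        have : (k : ℤ) ≤ 2 := by exact_mod_cast Nat.lt_succ_iff.mp hk3
        omega
      nlinarith [show (2 : ℤ) ≤ (r : ℤ) by exact_mod_cast hr2]
    have ht1' : (1 : ℤ) ≤ (t : ℤ) := by exact_mod_cast ht1
    have : (t : ℤ) ≤ blockSum s 0 t := by exact_mod_cast h1
    omega
  -- now k ≥ 3; set u := r * (k - 3) + 2
  set u : ℕ := r * (k - 3) + 2 with hu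
  have hucast : (u : ℤ) = (r : ℤ) * ((k : ℤ) - 3) + 2 := by
    have h3 : (3 : ℕ) ≤ k := hk3
    push_cast [hu]
    have : ((k - 3 : ℕ) : ℤ) = (k : ℤ) - 3 := by
      have := Nat.cast_sub h3 (R := ℤ); simpa using this
    rw [this]
  have htleN : ∀ j : ℕ, j + t ≤ n → blockSum s j t ≤ u := by
    intro j hj
    have := htle j hj
    rw [← hucast] at this
    exact_mod_cast this
  have hNs : N = blockSum s 0 n := by rw [hN, blockSum_total]
  -- the set defining chiSW is nonempty
  have hr2 : 2 ≤ r := hr.two_le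
  have hSne : {m | ∃ c : Finset (Fin n) → Fin m, ProperSW r n k t s c}.Nonempty := by
    refine ⟨Fintype.card (Finset (Fin n)), Fintype.equivFin (Finset (Fin n)), ?_⟩
    intro A hcard hwide hmult hall
    have j0 : Fin r := ⟨0, by omega⟩
    have hAeq : ∀ j, A j = A j0 := by
      intro j
      have := hall j j0
      exact (Fintype.equivFin (Finset (Fin n))).injective this
    obtain ⟨i, hi⟩ : (A j0).Nonempty := by
      rw [← Finset.card_pos, hcard j0]; omega
    have : ((univ : Finset (Fin r)).filter fun j => i ∈ A j).card = r := by
      rw [Finset.filter_true_of_mem (fun j _ => by rw [hAeq j]; exact hi)]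
      simp
    have h2 := hmult i
    rw [this] at h2
    have := (hs i).2
    omega
  -- extract an optimal proper SW coloring
  have hmem := Nat.sInf_mem hSne
  obtain ⟨c, hc⟩ := hmem
  -- the projection map
  have hblt : ∀ x : Fin N, bidx s x.val < n := fun x => (bidx_spec s (by rw [← hNs]; exact x.isLt)).1
  set π : Fin N → Fin n := fun x => ⟨bidx s x.val, hblt x⟩ with hπ
  have hπmem : ∀ x : Fin N, x ∈ blocks s N (π x) := by
    intro x
    obtain ⟨h1, h2, h3⟩ := bidx_spec s (by rw [← hNs]; exact x.isLt)
    simp only [blocks, Finset.mem_filter, Finset.mem_univ, true_and, hπ]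
    exact ⟨h2, h3⟩
  -- cardinality of the blocks
  have hcardblock : ∀ i : Fin n, (blocks s N i).card = s i := by
    intro i
    have hR : blockSum s 0 (i.val + 1) ≤ N := by
      rw [hNs]; exact blockSum_zero_mono s i.isLt
    have hB : blocks s N i = (Finset.Ico (blockSum s 0 i.val) (blockSum s 0 (i.val + 1))).attachFin
        (fun m hm => lt_of_lt_of_le (Finset.mem_Ico.mp hm).2 hR) := by
      ext x
      simp [blocks, Finset.mem_attachFin, Finset.mem_Ico]
    rw [hB, Finset.card_attachFin, Nat.card_Ico, blockSum_zero_succ]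
    have : sE s i.val = s i := by simp [sE, i.isLt]
    omega
  -- build a proper PW coloring with the same number of colors
  have hPW : ProperPW r N k u (blocks s N) (fun σ => c (σ.image π)) := by
    intro A hcard htrans hwide hdisj hall
    -- injectivity of π on each A j
    have hinj : ∀ j, Set.InjOn π (A j) := by
      intro j x hx y hy hxy
      have h1 : x ∈ A j ∩ blocks s N (π x) := Finset.mem_inter.mpr ⟨hx, hπmem x⟩
      have h2 : y ∈ A j ∩ blocks s N (π x) := by
        rw [hxy]; exact Finset.mem_inter.mpr ⟨hy, hπmem y⟩
      have := htrans j (π x)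
      exact Finset.card_le_one.mp this x h1 y h2
    refine hc (fun j => (A j).image π) ?_ ?_ ?_ ?_
    · intro j
      rw [Finset.card_image_of_injOn (hinj j), hcard j]
    · -- wideness of the projections
      intro j a hall'
      set a' : ℕ := min a (n - t) with ha'
      have ha't : a' + t ≤ n := by omega
      have hall'' : ∀ x ∈ A j, blockSum s 0 a' ≤ x.val ∧ x.val < blockSum s 0 a' + u := by
        intro x hx
        have hπx : (π x : Fin n) ∈ (A j).image π := Finset.mem_image_of_mem π hx
        obtain ⟨hax, hxa⟩ := hall' (π x) hπx
        have hπa' : a' ≤ (π x).val ∧ (π x).val < a' + t := by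
          have hxn : (π x).val < n := (π x).isLt
          omega
        obtain ⟨hb2, hb3⟩ := (Finset.mem_filter.mp (hπmem x)).2
        have hm1 : blockSum s 0 a' ≤ blockSum s 0 (π x).val :=
          blockSum_zero_mono s hπa'.1
        have hm2 : blockSum s 0 ((π x).val + 1) ≤ blockSum s 0 (a' + t) :=
          blockSum_zero_mono s hπa'.2
        have hsplit : blockSum s 0 (a' + t) = blockSum s 0 a' + blockSum s a' t := by
          simpa using blockSum_split s 0 a' t
        have hub : blockSum s a' t ≤ u := htleN a' ha't
        constructor
        · omega
        · omega
      exact hwide j (blockSum s 0 a') hall''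
    · -- multiplicity condition
      intro i
      have hex : ∀ j ∈ (univ : Finset (Fin r)).filter (fun j => i ∈ (A j).image π),
          ∃ x : Fin N, x ∈ A j ∧ x ∈ blocks s N i := by
        intro j hj
        obtain ⟨x, hx, hxi⟩ := Finset.mem_image.mp (Finset.mem_filter.mp hj).2
        exact ⟨x, hx, by rw [← hxi]; exact hπmem x⟩
      choose g hg using hex
      have hNpos : 0 < N := by
        have := le_blockSum s (le_refl n) (fun i => (hs i).1)
        omega
      have := Finset.card_le_card_of_injOn
        (s := (univ : Finset (Fin r)).filter (fun j => i ∈ (A j).image π))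
        (f := fun j => if h : j ∈ (univ : Finset (Fin r)).filter (fun j => i ∈ (A j).image π)
          then g j h else (⟨0, hNpos⟩ : Fin N))
        (t := blocks s N i) ?_ ?_
      · rw [hcardblock i] at this; exact this
      · intro j hj
        simp only [Finset.mem_coe] at hj ⊢
        simp only [dif_pos hj]
        exact (hg j hj).2
      · intro j hj j' hj' hjj'
        simp only [Finset.mem_coe] at hj hj'
        simp only [dif_pos hj, dif_pos hj'] at hjj'
        by_contra hne
        have hd := hdisj j j' hne
        have h1 := (hg j hj).1
        have h2 := (hg j' hj').1
        rw [hjj'] at h1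
        exact Finset.disjoint_left.mp hd h1 h2
    · intro j j'
      exact hall j j'
  have hle : chiPW r N k u (blocks s N) ≤ chiSW r n k t s :=
    Nat.sInf_le ⟨fun σ => c (σ.image π), hPW⟩
  exact le_trans hlow hle
end

section
/- Let P = {P_1,...,P_n} be the partition of [N] into consecutive blocks with |P_i| = s_i, N = Σ s_i, and suppose Σ_{i=j}^{j+t-1} s_i ≤ u for all j ∈ [n-t+1]. If A ⊆ [N] is a u-wide transversal k-subset (not contained in any interval of length u, meeting each P_i in at most one element), then its projection f(A) ⊆ [n] (where f maps elements of P_i to i) is a t-wide k-subset of [n]. -/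
open Finset

/-- a `u`-wide transversal `k`-subset of `[N]` projects along the
consecutive-blocks partition to a `t`-wide `k`-subset of `[n]`. -/
theorem stmt12 (n N k t u : ℕ) (hk : 1 ≤ k) (ht : t ≤ n)
    (s : Fin n → ℕ) (hN : N = ∑ i, s i)
    (hsum : ∀ j : ℕ, j + t ≤ n → blockSum s j t ≤ u)
    (f : Fin N → Fin n) (hf : ∀ x, x ∈ blocks s N (f x))
    (A : Finset (Fin N)) (hA : A.card = k) (hAw : Wide N u A)
    (hAt : Transversal (blocks s N) A) :
    (A.image f).card = k ∧ Wide n t (A.image f) := by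
  have hmono : ∀ a b : ℕ, a ≤ b → blockSum s 0 a ≤ blockSum s 0 b := by
    intro a b hab
    unfold blockSum
    exact Finset.sum_le_sum_of_subset (Finset.Ico_subset_Ico le_rfl (by omega))
  have hsplit : ∀ a b : ℕ, blockSum s 0 (a + b) = blockSum s 0 a + blockSum s a b := by
    intro a b
    unfold blockSum
    simp only [Nat.zero_add]
    rw [← Finset.sum_Ico_consecutive (fun i => sE s i) (Nat.zero_le a) (Nat.le_add_right a b)]
  have hinj : Set.InjOn f A := by
    intro x hx y hy hxy
    by_contra hne
    have hx' : x ∈ A ∩ blocks s N (f x) := mem_inter.mpr ⟨hx, hf x⟩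
    have hy' : y ∈ A ∩ blocks s N (f x) := mem_inter.mpr ⟨hy, hxy ▸ hf y⟩
    have h2 : 1 < (A ∩ blocks s N (f x)).card :=
      Finset.one_lt_card.mpr ⟨x, hx', y, hy', hne⟩
    have := hAt (f x)
    omega
  constructor
  · rw [Finset.card_image_of_injOn hinj, hA]
  · intro a ha
    obtain ⟨x0, hx0⟩ := Finset.card_pos.mp (by omega : 0 < A.card)
    have hfx0 := ha (f x0) (Finset.mem_image_of_mem f hx0)
    have han : a < n := lt_of_le_of_lt hfx0.1 (f x0).isLt
    set j := min a (n - t) with hj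
    have hjt : j + t ≤ n := by omega
    have hu := hsum j hjt
    apply hAw (blockSum s 0 a)
    intro x hx
    have hfx := ha (f x) (Finset.mem_image_of_mem f hx)
    have hbx := hf x
    simp only [blocks, Finset.mem_filter] at hbx
    have h1 : blockSum s 0 a ≤ blockSum s 0 (f x).val := hmono _ _ hfx.1
    have h2 : blockSum s 0 ((f x).val + 1) ≤ blockSum s 0 (j + t) := by
      apply hmono
      have := (f x).isLt
      omega
    have h3 : blockSum s 0 (j + t) = blockSum s 0 j + blockSum s j t := hsplit j t
    have h4 : blockSum s 0 j ≤ blockSum s 0 a := hmono _ _ (by omega)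
    exact ⟨by omega, by omega⟩
end
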